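/- arXiv:2306.07259 — 4 statements merged into one kernel-verified Lean document; each statement's English description precedes it below -/
import Mathlib

section
/- Let H be a real-analytic hypersurface in an open set U ⊆ ℂⁿ (n ≥ 2) that is curve-supported at a point p ∈ H by a support curve C such that C ∖ {p} is contained in a connected component V of U ∖ H. Then for every compact set K ⊆ H that is a neighborhood of p in H (i.e., H ∩ B_δ(p) ⊆ K for some δ > 0), there exists ε > 0 such that B_ε(p) ∖ V ⊆ K̂_rat. -/
open Metric

noncomputable section

/-- `H` is a (singular) real-analytic hypersurface in the open set `U ⊆ ℂⁿ`:
`H = {z ∈ U : ρ z = 0}` for some real-analytic `ρ : U → ℝ` (analytic over `ℝ`),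
`H` nonempty, and `ρ` does not vanish identically on any connected component of `U`. -/
def IsRealAnalyticHypersurface {n : ℕ} (U H : Set (EuclideanSpace ℂ (Fin n))) : Prop :=
  IsOpen U ∧ H.Nonempty ∧
    ∃ ρ : EuclideanSpace ℂ (Fin n) → ℝ,
      AnalyticOnNhd ℝ ρ U ∧
      H = {z | z ∈ U ∧ ρ z = 0} ∧
      ∀ z ∈ U, ∃ w ∈ connectedComponentIn U z, ρ w ≠ 0

/-- `C = φ '' 𝔻` is a support curve for `H` at `p`, parametrized by the nonconstant
holomorphic map `φ : 𝔻 → U` with `φ 0 = p` and `C ∩ H = {p}`. -/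
def IsSupportCurveVia {n : ℕ} (U H : Set (EuclideanSpace ℂ (Fin n)))
    (p : EuclideanSpace ℂ (Fin n)) (φ : ℂ → EuclideanSpace ℂ (Fin n))
    (C : Set (EuclideanSpace ℂ (Fin n))) : Prop :=
  DifferentiableOn ℂ φ (ball 0 1) ∧
  Set.MapsTo φ (ball 0 1) U ∧
  (∃ a ∈ ball (0 : ℂ) 1, ∃ b ∈ ball (0 : ℂ) 1, φ a ≠ φ b) ∧
  φ 0 = p ∧
  C = φ '' ball 0 1 ∧
  C ∩ H = {p}

/-- `C` is a support curve for `H` at `p`. -/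
def IsSupportCurve {n : ℕ} (U H : Set (EuclideanSpace ℂ (Fin n)))
    (p : EuclideanSpace ℂ (Fin n)) (C : Set (EuclideanSpace ℂ (Fin n))) : Prop :=
  ∃ φ : ℂ → EuclideanSpace ℂ (Fin n), IsSupportCurveVia U H p φ C

/-- `V` is a connected component of `U \ H`. -/
def IsComponentOfComplement {n : ℕ} (U H V : Set (EuclideanSpace ℂ (Fin n))) : Prop :=
  ∃ x ∈ U \ H, V = connectedComponentIn (U \ H) x

/-- `H` is curve-supported from two sides at `p`: there are two support curves at `p`
lying (off `p`) in two distinct connected components of `U \ H`. -/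
def CurveSupportedFromTwoSides {n : ℕ} (U H : Set (EuclideanSpace ℂ (Fin n)))
    (p : EuclideanSpace ℂ (Fin n)) : Prop :=
  ∃ C₁ C₂ V₁ V₂ : Set (EuclideanSpace ℂ (Fin n)),
    IsSupportCurve U H p C₁ ∧ IsSupportCurve U H p C₂ ∧
    IsComponentOfComplement U H V₁ ∧ IsComponentOfComplement U H V₂ ∧
    V₁ ≠ V₂ ∧ C₁ \ {p} ⊆ V₁ ∧ C₂ \ {p} ⊆ V₂

/-- `ψ` is an analytic disc attached to `S`: a nonconstant continuous map on the closed
unit disc, holomorphic on the open unit disc, with boundary values in `S`. -/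
def IsAttachedDisc {n : ℕ} (S : Set (EuclideanSpace ℂ (Fin n)))
    (ψ : ℂ → EuclideanSpace ℂ (Fin n)) : Prop :=
  ContinuousOn ψ (closedBall 0 1) ∧
  DifferentiableOn ℂ ψ (ball 0 1) ∧
  (∃ a ∈ closedBall (0 : ℂ) 1, ∃ b ∈ closedBall (0 : ℂ) 1, ψ a ≠ ψ b) ∧
  ψ '' sphere 0 1 ⊆ S

/-- The polynomial hull of `K ⊆ ℂⁿ`. -/
def polyHull {n : ℕ} (K : Set (EuclideanSpace ℂ (Fin n))) : Set (EuclideanSpace ℂ (Fin n)) :=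
  {z | ∀ P : MvPolynomial (Fin n) ℂ,
    ‖MvPolynomial.eval (fun i => z i) P‖ ≤
      ⨆ w : K, ‖MvPolynomial.eval (fun i => (w : EuclideanSpace ℂ (Fin n)) i) P‖}

/-- The rational hull of `K ⊆ ℂⁿ`. -/
def ratHull {n : ℕ} (K : Set (EuclideanSpace ℂ (Fin n))) : Set (EuclideanSpace ℂ (Fin n)) :=
  {z | ∀ P : MvPolynomial (Fin n) ℂ,
    MvPolynomial.eval (fun i => z i) P ∈
      (fun w : EuclideanSpace ℂ (Fin n) => MvPolynomial.eval (fun i => w i) P) '' K}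

open Set Filter in
private lemma polyDiff {n : ℕ} (P : MvPolynomial (Fin n) ℂ) :
    Differentiable ℂ (fun z : EuclideanSpace ℂ (Fin n) => MvPolynomial.eval (fun i => z i) P) := by
  induction P using MvPolynomial.induction_on with
  | C a => simpa using differentiable_const a
  | add p q hp hq => simp only [MvPolynomial.eval_add]; exact hp.add hq
  | mul_X p i hp =>
      simp only [MvPolynomial.eval_mul, MvPolynomial.eval_X]
      exact hp.mul (EuclideanSpace.proj (𝕜 := ℂ) i).differentiable

open Set Filter

private lemma key_meets {n : ℕ} (φ : ℂ → EuclideanSpace ℂ (Fin n))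
    (hφd : DifferentiableOn ℂ φ (ball 0 1))
    {r : ℝ} (hr0 : 0 < r) (hr1 : r < 1)
    {p q : EuclideanSpace ℂ (Fin n)} (hφ0 : φ 0 = p)
    {V : Set (EuclideanSpace ℂ (Fin n))}
    (hVtube : ∀ t ∈ Set.Icc (0:ℝ) 1, ∀ x ∈ sphere (0:ℂ) r, φ x + t • (q - p) ∈ V)
    (hVcurve : ∀ x ∈ closedBall (0:ℂ) r, φ x ≠ p → φ x ∈ V)
    {R : ℝ} (htube : ∀ t ∈ Set.Icc (0:ℝ) 1, ∀ x ∈ closedBall (0:ℂ) r,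
      φ x + t • (q - p) ∈ closedBall p R)
    {Q : EuclideanSpace ℂ (Fin n) → ℂ} (hQ : Differentiable ℂ Q)
    (hQp : Q p ≠ 0) (hQq : Q q = 0)
    {A₁ B₁ : Set (EuclideanSpace ℂ (Fin n))}
    (hA₁c : IsCompact A₁) (hB₁c : IsCompact B₁)
    (hcover : Q ⁻¹' {0} ∩ closedBall p R = A₁ ∪ B₁)
    (hdisj : Disjoint A₁ B₁) (hqA : q ∈ A₁) :
    (A₁ ∩ V).Nonempty := by
  set v : EuclideanSpace ℂ (Fin n) := q - p with hv
  -- separation constant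
  obtain ⟨η, hη, hsep⟩ : ∃ η > 0, ∀ a ∈ A₁, ∀ b ∈ B₁, 3 * η ≤ dist a b := by
    rcases B₁.eq_empty_or_nonempty with hB | hB
    · exact ⟨1, one_pos, by simp [hB]⟩
    · obtain ⟨a₀, ha₀, hmin⟩ := hA₁c.exists_isMinOn ⟨q, hqA⟩
        (continuous_infDist_pt B₁).continuousOn
      have hpos : 0 < infDist a₀ B₁ := by
        rw [← hB₁c.isClosed.notMem_iff_infDist_pos hB]
        exact fun hmem => (hdisj.ne_of_mem ha₀ hmem) rfl
      refine ⟨infDist a₀ B₁ / 3, by linarith, fun a ha b hb => ?_⟩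
      have h1 : infDist a₀ B₁ ≤ infDist a B₁ := hmin ha
      have h2 : infDist a B₁ ≤ dist a b := infDist_le_dist_of_mem hb
      linarith
  -- membership in ball 0 1
  have hsub1 : closedBall (0:ℂ) r ⊆ ball (0:ℂ) 1 := by
    intro x hx
    exact lt_of_le_of_lt (mem_closedBall.mp hx) (by simpa using hr1)
  have hφc : ContinuousOn φ (ball 0 1) := hφd.continuousOn
  -- the set S of parameters t whose disc has a zero located in A₁
  set S : Set ℝ := {t | t ∈ Set.Icc (0:ℝ) 1 ∧
      ∃ x ∈ closedBall (0:ℂ) r, Q (φ x + t • v) = 0 ∧ φ x + t • v ∈ A₁} with hS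
  have hScompact : IsCompact S := by
    set f : ℝ × ℂ → ℂ × EuclideanSpace ℂ (Fin n) :=
      fun z => (Q (φ z.2 + z.1 • v), φ z.2 + z.1 • v) with hf
    have hfc : ContinuousOn f (Set.Icc (0:ℝ) 1 ×ˢ closedBall (0:ℂ) r) := by
      have h1 : ContinuousOn (fun z : ℝ × ℂ => φ z.2 + z.1 • v)
          (Set.Icc (0:ℝ) 1 ×ˢ closedBall (0:ℂ) r) := by
        refine ContinuousOn.add ?_ ?_
        · exact hφc.comp continuous_snd.continuousOn (fun z hz => hsub1 hz.2)
        · exact (continuous_fst.smul continuous_const).continuousOn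
      exact (hQ.continuous.comp_continuousOn h1).prodMk h1
    have hTclosed : IsClosed ((Set.Icc (0:ℝ) 1 ×ˢ closedBall (0:ℂ) r) ∩
        f ⁻¹' ({0} ×ˢ A₁)) :=
      hfc.preimage_isClosed_of_isClosed
        (isClosed_Icc.prod isClosed_closedBall) (isClosed_singleton.prod hA₁c.isClosed)
    have hTcompact : IsCompact ((Set.Icc (0:ℝ) 1 ×ˢ closedBall (0:ℂ) r) ∩
        f ⁻¹' ({0} ×ˢ A₁)) :=
      (isCompact_Icc.prod (isCompact_closedBall _ _)).of_isClosed_subset hTclosed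
        inter_subset_left
    have hSim : S = Prod.fst '' ((Set.Icc (0:ℝ) 1 ×ˢ closedBall (0:ℂ) r) ∩
        f ⁻¹' ({0} ×ˢ A₁)) := by
      ext t
      constructor
      · rintro ⟨htI, x, hx, h0, hA⟩
        exact ⟨(t, x), ⟨⟨htI, hx⟩, ⟨h0, hA⟩⟩, rfl⟩
      · rintro ⟨⟨t', x⟩, ⟨⟨htI, hx⟩, ⟨h0, hA⟩⟩, rfl⟩
        exact ⟨htI, x, hx, h0, hA⟩
    rw [hSim]
    exact hTcompact.image continuous_fst
  have hS1 : (1:ℝ) ∈ S := by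
    refine ⟨⟨zero_le_one, le_refl 1⟩, 0, by simpa using hr0.le, ?_, ?_⟩
    · rw [hφ0, one_smul, hv, add_sub_cancel]; exact hQq
    · rw [hφ0, one_smul, hv, add_sub_cancel]; exact hqA
  have hSne : S.Nonempty := ⟨1, hS1⟩
  have hSbdd : BddBelow S := ⟨0, fun t ht => ht.1.1⟩
  set t₀ : ℝ := sInf S with ht₀
  have htS : t₀ ∈ S := hScompact.isClosed.csInf_mem hSne hSbdd
  obtain ⟨⟨ht00, ht01⟩, x₀, hx₀r, hF0, hloc⟩ := htS
  have htIcc : t₀ ∈ Set.Icc (0:ℝ) 1 := ⟨ht00, ht01⟩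
  -- helper: a zero of Q in the tube, whose infDist to A₁ is < 3η, lies in A₁
  have hzone : ∀ t ∈ Set.Icc (0:ℝ) 1, ∀ x ∈ closedBall (0:ℂ) r,
      Q (φ x + t • v) = 0 → infDist (φ x + t • v) A₁ < 3 * η → φ x + t • v ∈ A₁ := by
    intro t ht x hx h0 hd
    have hmem : φ x + t • v ∈ A₁ ∪ B₁ := by
      rw [← hcover]; exact ⟨h0, htube t ht x hx⟩
    rcases hmem with h | h
    · exact h
    · exfalso
      obtain ⟨a, ha, hda⟩ := hA₁c.exists_infDist_eq_dist ⟨q, hqA⟩ (φ x + t • v)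
      have := hsep a ha _ h
      rw [dist_comm] at this
      rw [hda] at hd
      linarith
  by_cases hxs : x₀ ∈ sphere (0:ℂ) r
  · exact ⟨_, hloc, hVtube t₀ htIcc x₀ hxs⟩
  have hx₀lt : x₀ ∈ ball (0:ℂ) r := by
    rcases lt_or_eq_of_le (mem_closedBall.mp hx₀r) with h | h
    · exact mem_ball.mpr h
    · exact absurd (by simpa [mem_sphere] using h) hxs
  by_cases ht0' : t₀ = 0
  · refine ⟨_, hloc, ?_⟩
    have h1 : φ x₀ + t₀ • v = φ x₀ := by rw [ht0', zero_smul, add_zero]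
    rw [h1] at hF0 hloc ⊢
    exact hVcurve x₀ hx₀r (fun h => hQp (h ▸ hF0))
  have htpos : 0 < t₀ := lt_of_le_of_ne ht00 (Ne.symm ht0')
  -- circle case at time t₀
  by_cases hcirc : ∃ x ∈ sphere (0:ℂ) r, Q (φ x + t₀ • v) = 0 ∧
      infDist (φ x + t₀ • v) A₁ ≤ 2 * η
  · obtain ⟨x, hx, h0, hd⟩ := hcirc
    have hxcb : x ∈ closedBall (0:ℂ) r := sphere_subset_closedBall hx
    have hmem : φ x + t₀ • v ∈ A₁ := hzone t₀ htIcc x hxcb h0 (by linarith)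
    exact ⟨_, hmem, hVtube t₀ htIcc x hx⟩
  -- interior case : derive False
  exfalso
  push_neg at hcirc
  set W : Set ℂ := {x | x ∈ ball (0:ℂ) r ∧ infDist (φ x + t₀ • v) A₁ < 2 * η} with hW
  have hgc : ∀ u : Set ℂ, u ⊆ ball (0:ℂ) 1 →
      ContinuousOn (fun x => infDist (φ x + t₀ • v) A₁) u := by
    intro u hu
    exact (continuous_infDist_pt A₁).comp_continuousOn
      (((hφc.mono hu).add continuousOn_const))
  have hWopen : IsOpen W := by
    have : W = ball (0:ℂ) r ∩ (fun x => infDist (φ x + t₀ • v) A₁) ⁻¹' (Set.Iio (2*η)) := by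
      ext x; simp [hW, Set.mem_setOf_eq, and_comm]
    rw [this]
    exact ContinuousOn.isOpen_inter_preimage
      (hgc _ ((ball_subset_ball hr1.le))) isOpen_ball isOpen_Iio
  have hx₀W : x₀ ∈ W := ⟨hx₀lt, by rw [infDist_zero_of_mem hloc]; positivity⟩
  set ω : Set ℂ := connectedComponentIn W x₀ with hω
  have hωopen : IsOpen ω := hWopen.connectedComponentIn
  have hωx₀ : x₀ ∈ ω := mem_connectedComponentIn hx₀W
  have hωW : ω ⊆ W := connectedComponentIn_subset _ _
  -- closure of ω
  have hWbar_closed : IsClosed (closedBall (0:ℂ) r ∩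
      (fun x => infDist (φ x + t₀ • v) A₁) ⁻¹' (Set.Iic (2*η))) :=
    (hgc _ hsub1).preimage_isClosed_of_isClosed isClosed_closedBall isClosed_Iic
  have hclos : closure ω ⊆ closedBall (0:ℂ) r ∩
      (fun x => infDist (φ x + t₀ • v) A₁) ⁻¹' (Set.Iic (2*η)) := by
    refine closure_minimal ?_ hWbar_closed
    intro x hx
    exact ⟨ball_subset_closedBall (hωW hx).1, le_of_lt (hωW hx).2⟩
  -- frontier of ω: Q(·+t₀v) does not vanish there
  have hfrF : ∀ x ∈ closure ω \ ω, Q (φ x + t₀ • v) ≠ 0 := by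
    intro x hx
    obtain ⟨hxcb, hxd⟩ := hclos hx.1
    by_cases hxr : x ∈ ball (0:ℂ) r
    · by_cases hlt : infDist (φ x + t₀ • v) A₁ < 2 * η
      · exfalso
        have hxW : x ∈ W := ⟨hxr, hlt⟩
        have h2 : x ∈ connectedComponentIn W x := mem_connectedComponentIn hxW
        obtain ⟨y, hyx, hyω⟩ : (connectedComponentIn W x ∩ ω).Nonempty :=
          mem_closure_iff.mp hx.1 _ hWopen.connectedComponentIn h2
        have e1 := connectedComponentIn_eq hyx
        have e2 := connectedComponentIn_eq hyω
        exact hx.2 (by rw [e1, ← e2] at h2; exact h2)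
      · intro h0
        have h2η : infDist (φ x + t₀ • v) A₁ = 2 * η := le_antisymm hxd (not_lt.mp hlt)
        have hmem : φ x + t₀ • v ∈ A₁ := hzone t₀ htIcc x hxcb h0 (by linarith)
        rw [infDist_zero_of_mem hmem] at h2η
        linarith
    · have hxsph : x ∈ sphere (0:ℂ) r := by
        rcases lt_or_eq_of_le (mem_closedBall.mp hxcb) with h | h
        · exact absurd (mem_ball.mpr h) hxr
        · simpa [mem_sphere] using h
      intro h0
      have h2 := hcirc x hxsph h0
      have h3 : infDist (φ x + t₀ • v) A₁ ≤ 2 * η := hxd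
      linarith
  -- nonempty frontier
  have hfr_ne : (closure ω \ ω).Nonempty := by
    by_contra hemp
    rw [Set.not_nonempty_iff_eq_empty, Set.diff_eq_empty] at hemp
    have hclopen : IsClopen ω :=
      ⟨isClosed_of_closure_subset hemp, hωopen⟩
    rcases isClopen_iff.mp hclopen with h | h
    · rw [h] at hωx₀; exact hωx₀
    · have : ((r : ℂ) + 1) ∈ W := hωW (h ▸ Set.mem_univ _)
      have hb := this.1
      rw [mem_ball, dist_zero_right] at hb
      have : |r + 1| ≤ ‖(r:ℂ) + 1‖ := by
        rw [← Complex.ofReal_one, ← Complex.ofReal_add, Complex.norm_real]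
        exact le_rfl
      have h1 : r + 1 ≤ ‖(r:ℂ) + 1‖ := le_trans (le_abs_self _) this
      linarith
  have hfr_closed : IsClosed (closure ω \ ω) :=
    isClosed_closure.inter hωopen.isClosed_compl
  have hfr_compact : IsCompact (closure ω \ ω) :=
    (isCompact_closedBall (0:ℂ) r).of_isClosed_subset hfr_closed
      (fun x hx => (hclos hx.1).1)
  -- minimum of ‖Q∘ψ t₀‖ on the frontier
  have hnormc : ContinuousOn (fun x => ‖Q (φ x + t₀ • v)‖) (ball (0:ℂ) 1) :=
    (hQ.continuous.comp_continuousOn (hφc.add continuousOn_const)).norm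
  obtain ⟨z₀, hz₀, hzmin⟩ := hfr_compact.exists_isMinOn hfr_ne
    (hnormc.mono (fun x hx => hsub1 (hclos hx.1).1))
  set m : ℝ := ‖Q (φ z₀ + t₀ • v)‖ with hm
  have hmpos : 0 < m := norm_pos_iff.mpr (hfrF z₀ hz₀)
  -- tube lemma: uniform lower bound near the frontier
  set N : Set (ℝ × ℂ) := {z | z.2 ∈ ball (0:ℂ) 1 ∧ m / 2 < ‖Q (φ z.2 + z.1 • v)‖} with hN
  have hNopen : IsOpen N := by
    have heq : N = ((Set.univ : Set ℝ) ×ˢ ball (0:ℂ) 1) ∩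
        (fun z : ℝ × ℂ => ‖Q (φ z.2 + z.1 • v)‖) ⁻¹' (Set.Ioi (m/2)) := by
      ext z
      simp [hN, Set.mem_setOf_eq, Set.mem_prod, and_comm]
    rw [heq]
    refine ContinuousOn.isOpen_inter_preimage ?_ (isOpen_univ.prod isOpen_ball) isOpen_Ioi
    refine ContinuousOn.norm (hQ.continuous.comp_continuousOn (ContinuousOn.add ?_ ?_))
    · exact hφc.comp continuous_snd.continuousOn (fun z hz => hz.2)
    · exact (continuous_fst.smul continuous_const).continuousOn
  have hsubN : ({t₀} : Set ℝ) ×ˢ (closure ω \ ω) ⊆ N := by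
    intro z hz
    obtain ⟨ht, hx⟩ := hz
    have ht1 : z.1 = t₀ := ht
    refine ⟨hsub1 (hclos hx.1).1, ?_⟩
    rw [ht1]
    have h2 : m ≤ ‖Q (φ z.2 + t₀ • v)‖ := hzmin hx
    linarith
  obtain ⟨u₁, v₁, hu₁, hv₁, htu₁, hfrv₁, huv⟩ :=
    generalized_tube_lemma isCompact_singleton hfr_compact hNopen hsubN
  obtain ⟨σ, hσ, hσu⟩ := Metric.isOpen_iff.mp hu₁ t₀ (htu₁ rfl)
  set σ₂ : ℝ := η / (‖v‖ + 1) with hσ₂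
  have hσ₂pos : 0 < σ₂ := by positivity
  set lo : ℝ := max 0 (t₀ - min σ σ₂) with hlo
  have hlolt : lo < t₀ := by
    rw [hlo]
    apply max_lt htpos
    have : 0 < min σ σ₂ := lt_min hσ hσ₂pos
    linarith
  -- the key estimate for all s slightly below t₀
  have hkey : ∀ s ∈ Set.Ioo lo t₀, m / 2 ≤ ‖Q (φ x₀ + s • v)‖ := by
    intro s hs
    have hs0 : 0 ≤ s := le_of_lt (lt_of_le_of_lt (le_max_left _ _) hs.1)
    have hs1 : s ≤ 1 := le_trans hs.2.le ht01
    have hsIcc : s ∈ Set.Icc (0:ℝ) 1 := ⟨hs0, hs1⟩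
    have hdist : t₀ - s < min σ σ₂ := by
      have := hs.1
      have h2 : t₀ - min σ σ₂ < s := lt_of_le_of_lt (le_max_right _ _) this
      linarith
    have hshift : ∀ x : ℂ, dist (φ x + s • v) (φ x + t₀ • v) < η := by
      intro x
      have : φ x + s • v - (φ x + t₀ • v) = (s - t₀) • v := by
        rw [sub_smul]; abel
      rw [dist_eq_norm, this, norm_smul]
      have h1 : ‖(s - t₀ : ℝ)‖ = t₀ - s := by
        rw [Real.norm_eq_abs, abs_sub_comm, abs_of_nonneg (by linarith [hs.2.le])]
      rw [h1]
      have h2 : t₀ - s < σ₂ := lt_of_lt_of_le hdist (min_le_right _ _)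
      calc (t₀ - s) * ‖v‖ ≤ (t₀ - s) * (‖v‖ + 1) := by nlinarith [norm_nonneg v, hs.2, hs.1]
        _ < σ₂ * (‖v‖ + 1) := by
            have : (0:ℝ) < ‖v‖ + 1 := by positivity
            exact mul_lt_mul_of_pos_right h2 this
        _ = η := by
            rw [hσ₂]
            field_simp
    -- no zeros on closure ω at time s
    have hzf : ∀ x ∈ closure ω, Q (φ x + s • v) ≠ 0 := by
      intro x hx h0
      obtain ⟨hxcb, hxd⟩ := hclos hx
      have hd3 : infDist (φ x + s • v) A₁ < 3 * η := by
        have h1 : infDist (φ x + s • v) A₁ ≤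
            infDist (φ x + t₀ • v) A₁ + dist (φ x + s • v) (φ x + t₀ • v) :=
          infDist_le_infDist_add_dist
        have h2 : infDist (φ x + t₀ • v) A₁ ≤ 2 * η := hxd
        have h3 := hshift x
        linarith
      have hmem : φ x + s • v ∈ A₁ := hzone s hsIcc x hxcb h0 hd3
      have hsS : s ∈ S := by
        rw [hS]
        exact ⟨hsIcc, x, hxcb, h0, hmem⟩
      have : t₀ ≤ s := ht₀ ▸ csInf_le hSbdd hsS
      linarith [hs.2]
    -- maximum modulus for the inverse
    have hFdiff : DifferentiableOn ℂ (fun x => Q (φ x + s • v)) (ball (0:ℂ) 1) :=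
      hQ.comp_differentiableOn (hφd.add_const (s • v))
    have hωball : ω ⊆ ball (0:ℂ) 1 := fun x hx => hsub1 (ball_subset_closedBall (hωW hx).1)
    have hclosball : closure ω ⊆ ball (0:ℂ) 1 := fun x hx => hsub1 (hclos hx).1
    have hdcc : DiffContOnCl ℂ (fun x => (Q (φ x + s • v))⁻¹) ω := by
      constructor
      · exact (hFdiff.mono hωball).inv (fun x hx => hzf x (subset_closure hx))
      · exact ((hFdiff.continuousOn.mono hclosball).inv₀ hzf)
    have hfrbound : ∀ x ∈ frontier ω, ‖(Q (φ x + s • v))⁻¹‖ ≤ (m / 2)⁻¹ := by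
      intro x hx
      rw [hωopen.frontier_eq] at hx
      have hxv₁ : x ∈ v₁ := hfrv₁ hx
      have hsu₁ : s ∈ u₁ := hσu (by
        rw [mem_ball, Real.dist_eq, abs_sub_comm, abs_of_nonneg (by linarith [hs.2.le])]
        exact lt_of_lt_of_le hdist (min_le_left _ _))
      have hmem : ((s, x) : ℝ × ℂ) ∈ N := huv ⟨hsu₁, hxv₁⟩
      have h2 : m / 2 < ‖Q (φ x + s • v)‖ := hmem.2
      rw [norm_inv]
      exact inv_anti₀ (by linarith) h2.le
    have hbnd : ‖(Q (φ x₀ + s • v))⁻¹‖ ≤ (m / 2)⁻¹ :=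
      Complex.norm_le_of_forall_mem_frontier_norm_le
        ((isBounded_ball (x := (0:ℂ)) (r := r)).subset
          (fun x hx => (hωW hx).1)) hdcc hfrbound (subset_closure hωx₀)
    have hne : Q (φ x₀ + s • v) ≠ 0 := hzf x₀ (subset_closure hωx₀)
    rw [norm_inv] at hbnd
    have hpos : 0 < ‖Q (φ x₀ + s • v)‖ := norm_pos_iff.mpr hne
    have hm2 : (0:ℝ) < m / 2 := by linarith
    rw [inv_le_inv₀ hpos hm2] at hbnd
    exact hbnd
  -- pass to the limit s → t₀ from the left
  have hlim : Filter.Tendsto (fun s : ℝ => ‖Q (φ x₀ + s • v)‖) (nhdsWithin t₀ (Set.Iio t₀))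
      (nhds ‖Q (φ x₀ + t₀ • v)‖) := by
    have hc : Continuous (fun s : ℝ => ‖Q (φ x₀ + s • v)‖) :=
      (hQ.continuous.comp (continuous_const.add
        ((continuous_id.smul continuous_const)))).norm
    exact (hc.tendsto t₀).mono_left nhdsWithin_le_nhds
  have hev : ∀ᶠ s in nhdsWithin t₀ (Set.Iio t₀), m / 2 ≤ ‖Q (φ x₀ + s • v)‖ := by
    filter_upwards [Ioo_mem_nhdsLT_of_mem ⟨hlolt, le_refl t₀⟩] with s hs
    exact hkey s hs
  have hge : m / 2 ≤ ‖Q (φ x₀ + t₀ • v)‖ := ge_of_tendsto hlim hev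
  rw [hF0, norm_zero] at hge
  linarith

theorem rational_hull_contains_complement_side {n : ℕ} (hn : 2 ≤ n)
    (U H : Set (EuclideanSpace ℂ (Fin n)))
    (hH : IsRealAnalyticHypersurface U H)
    (p : EuclideanSpace ℂ (Fin n)) (hp : p ∈ H)
    (φ : ℂ → EuclideanSpace ℂ (Fin n)) (C V : Set (EuclideanSpace ℂ (Fin n)))
    (hC : IsSupportCurveVia U H p φ C)
    (hV : IsComponentOfComplement U H V)
    (hCV : C \ {p} ⊆ V) :
    ∀ K : Set (EuclideanSpace ℂ (Fin n)), IsCompact K → K ⊆ H →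
      (∃ δ > 0, H ∩ ball p δ ⊆ K) →
      ∃ ε > 0, ball p ε \ V ⊆ ratHull K := by
  intro K hK hKH hKnbhd
  obtain ⟨δ₀, hδ₀, hsub⟩ := hKnbhd
  obtain ⟨hUopen, -, ρ, hρ, hHeq, -⟩ := hH
  obtain ⟨hφd, hφU, ⟨a, ha, b, hb, hab⟩, hφ0, hCeq, hCH⟩ := hC
  obtain ⟨x₀, hx₀UH, hVeq⟩ := hV
  have hφc : ContinuousOn φ (ball 0 1) := hφd.continuousOn
  have hpU : p ∈ U := by rw [hHeq] at hp; exact hp.1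
  have hUH : IsOpen (U \ H) := by
    have heq : U \ H = {z | z ∈ U ∧ ρ z ≠ 0} := by
      ext z
      constructor
      · rintro ⟨h1, h2⟩
        exact ⟨h1, fun h0 => h2 (by rw [hHeq]; exact ⟨h1, h0⟩)⟩
      · rintro ⟨h1, h2⟩
        exact ⟨h1, fun hzH => h2 (by rw [hHeq] at hzH; exact hzH.2)⟩
    rw [heq, isOpen_iff_mem_nhds]
    intro z hz
    have h1 : ∀ᶠ w in nhds z, ρ w ≠ 0 := ((hρ z hz.1).continuousAt).eventually_ne hz.2
    have h2 : ∀ᶠ w in nhds z, w ∈ U := hUopen.mem_nhds hz.1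
    exact (h2.and h1)
  have hVsub : V ⊆ U \ H := hVeq ▸ connectedComponentIn_subset _ _
  have hVopen : IsOpen V := hVeq ▸ hUH.connectedComponentIn
  -- radius δ with closed ball inside U
  obtain ⟨δ₁, hδ₁, hδ₁U⟩ := Metric.isOpen_iff.mp hUopen p hpU
  set δ : ℝ := min δ₀ δ₁ with hδdef
  have hδpos : 0 < δ := lt_min hδ₀ hδ₁
  have hδU : closedBall p (δ/2) ⊆ U := by
    refine Subset.trans ?_ hδ₁U
    intro z hz
    rw [mem_ball]
    calc dist z p ≤ δ/2 := hz
      _ < δ := by linarith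
      _ ≤ δ₁ := min_le_right _ _
  have hδK : ∀ z ∈ H, z ∈ closedBall p (δ/2) → z ∈ K := by
    intro z hz hzb
    refine hsub ⟨hz, ?_⟩
    rw [mem_ball]
    calc dist z p ≤ δ/2 := hzb
      _ < δ := by linarith
      _ ≤ δ₀ := min_le_left _ _
  -- a coordinate where φ is nonconstant
  obtain ⟨j, hj⟩ : ∃ j, φ a j ≠ φ b j := by
    by_contra hcon
    push_neg at hcon
    exact hab (by ext i; exact hcon i)
  have hhd : DifferentiableOn ℂ (fun ζ => φ ζ j - p j) (ball 0 1) := by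
    have hproj : Differentiable ℂ (fun w : EuclideanSpace ℂ (Fin n) => w j) :=
      (EuclideanSpace.proj (𝕜 := ℂ) j).differentiable
    exact (hproj.comp_differentiableOn hφd).sub_const _
  have hana : AnalyticOnNhd ℂ (fun ζ => φ ζ j - p j) (ball 0 1) :=
    hhd.analyticOnNhd isOpen_ball
  obtain ⟨ρ₂, hρ₂, hρ₂prop⟩ : ∃ ρ₂ > 0, ∀ ζ : ℂ, ζ ≠ 0 → dist ζ 0 < ρ₂ → φ ζ j - p j ≠ 0 := by
    rcases (hana 0 (by simp)).eventually_eq_zero_or_eventually_ne_zero with hev | hev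
    · exfalso
      have hEq := hana.eqOn_zero_of_preconnected_of_eventuallyEq_zero
        ((convex_ball (0:ℂ) 1).isPreconnected) (by simp) hev
      have h1 : φ a j - p j = 0 := hEq ha
      have h2 : φ b j - p j = 0 := hEq hb
      exact hj (by rw [sub_eq_zero.mp h1, sub_eq_zero.mp h2])
    · rw [eventually_nhdsWithin_iff, Metric.eventually_nhds_iff] at hev
      obtain ⟨ρ₂, hρ₂, hprop⟩ := hev
      exact ⟨ρ₂, hρ₂, fun ζ hζ hd => hprop hd hζ⟩
  -- continuity of φ at 0
  obtain ⟨σ₀, hσ₀, hσ₀prop⟩ : ∃ σ₀ > 0, ∀ x : ℂ, dist x 0 < σ₀ → dist (φ x) p < δ/4 := by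
    have hc0 : ContinuousAt φ 0 :=
      hφc.continuousAt (isOpen_ball.mem_nhds (by simp))
    have := Metric.continuousAt_iff.mp hc0 (δ/4) (by linarith)
    obtain ⟨σ₀, hσ₀, hprop⟩ := this
    exact ⟨σ₀, hσ₀, fun x hx => by simpa [hφ0] using hprop hx⟩
  -- the radius r
  set r : ℝ := min (min ρ₂ σ₀) 1 / 2 with hrdef
  have hr0 : 0 < r := by
    have : 0 < min (min ρ₂ σ₀) 1 := lt_min (lt_min hρ₂ hσ₀) one_pos
    positivity
  have hr1 : r < 1 := by
    have h1 : min (min ρ₂ σ₀) 1 ≤ 1 := min_le_right _ _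
    rw [hrdef]; linarith
  have hrρ₂ : r < ρ₂ := by
    have h1 : min (min ρ₂ σ₀) 1 ≤ ρ₂ := le_trans (min_le_left _ _) (min_le_left _ _)
    rw [hrdef]; linarith
  have hrσ₀ : r < σ₀ := by
    have h1 : min (min ρ₂ σ₀) 1 ≤ σ₀ := le_trans (min_le_left _ _) (min_le_right _ _)
    rw [hrdef]; linarith
  have hsub1 : closedBall (0:ℂ) r ⊆ ball (0:ℂ) 1 := by
    intro x hx
    rw [mem_ball]
    exact lt_of_le_of_lt (mem_closedBall.mp hx) hr1
  have hφnear : ∀ x ∈ closedBall (0:ℂ) r, dist (φ x) p < δ/4 := by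
    intro x hx
    exact hσ₀prop x (lt_of_le_of_lt (mem_closedBall.mp hx) hrσ₀)
  have hpSphere : ∀ x ∈ sphere (0:ℂ) r, φ x ≠ p := by
    intro x hx hcon
    have hx0 : x ≠ 0 := by
      intro h0
      rw [h0] at hx
      simp [mem_sphere] at hx
      exact absurd hx.symm (ne_of_gt hr0)
    refine hρ₂prop x hx0 (by rw [mem_sphere] at hx; rw [hx]; exact hrρ₂) ?_
    rw [hcon]
    ring
  have hsphV : ∀ x ∈ sphere (0:ℂ) r, φ x ∈ V := by
    intro x hx
    refine hCV ⟨?_, ?_⟩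
    · rw [hCeq]
      exact ⟨x, hsub1 (sphere_subset_closedBall hx), rfl⟩
    · simp only [Set.mem_singleton_iff]
      exact hpSphere x hx
  -- the thickening constant τ
  obtain ⟨τ, hτ, hτprop⟩ : ∃ τ > 0, ∀ z ∈ φ '' sphere (0:ℂ) r, ∀ w, dist w z ≤ τ → w ∈ V := by
    have hKsphc : IsCompact (φ '' sphere (0:ℂ) r) :=
      (isCompact_sphere (0:ℂ) r).image_of_continuousOn
        (hφc.mono (fun x hx => hsub1 (sphere_subset_closedBall hx)))
    have hKsphV : φ '' sphere (0:ℂ) r ⊆ V := by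
      rintro z ⟨x, hx, rfl⟩; exact hsphV x hx
    have hVc_ne : (Vᶜ : Set (EuclideanSpace ℂ (Fin n))).Nonempty :=
      ⟨p, fun hpV => (hVsub hpV).2 hp⟩
    have hsphne : (φ '' sphere (0:ℂ) r).Nonempty := by
      refine ⟨φ r, ⟨(r : ℂ), ?_, rfl⟩⟩
      simp [mem_sphere, Complex.dist_eq, abs_of_pos hr0]
    obtain ⟨z₁, hz₁, hmin⟩ := hKsphc.exists_isMinOn hsphne
      (continuous_infDist_pt (Vᶜ : Set (EuclideanSpace ℂ (Fin n)))).continuousOn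
    have hpos : 0 < infDist z₁ Vᶜ := by
      rw [← (hVopen.isClosed_compl).notMem_iff_infDist_pos hVc_ne]
      simp only [Set.mem_compl_iff, not_not]
      exact hKsphV hz₁
    refine ⟨infDist z₁ Vᶜ / 2, by linarith, fun z hz w hw => ?_⟩
    by_contra hwV
    have h1 : infDist z₁ Vᶜ ≤ infDist z Vᶜ := hmin hz
    have h2 : infDist z Vᶜ ≤ dist z w := infDist_le_dist_of_mem hwV
    rw [dist_comm] at h2
    linarith
  -- the final ε
  refine ⟨min τ (δ/4), lt_min hτ (by linarith), ?_⟩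
  rintro q ⟨hqball, hqV⟩
  have hqpτ : dist q p < τ := lt_of_lt_of_le (mem_ball.mp hqball) (min_le_left _ _)
  have hqpδ : dist q p < δ/4 := lt_of_lt_of_le (mem_ball.mp hqball) (min_le_right _ _)
  intro P
  by_cases hqK : q ∈ K
  · exact ⟨q, hqK, rfl⟩
  have hqH : q ∉ H := by
    intro hqH
    exact hqK (hδK q hqH (by rw [mem_closedBall]; linarith))
  by_contra hPn
  set Q : EuclideanSpace ℂ (Fin n) → ℂ :=
    fun z => MvPolynomial.eval (fun i => z i) P - MvPolynomial.eval (fun i => q i) P with hQdef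
  have hQd : Differentiable ℂ Q := (polyDiff P).sub_const _
  have hQq : Q q = 0 := sub_self _
  have hQK : ∀ w ∈ K, Q w ≠ 0 := by
    intro w hw h0
    exact hPn ⟨w, hw, sub_eq_zero.mp h0⟩
  have hpK : p ∈ K := hsub ⟨hp, mem_ball_self hδ₀⟩
  have hQp : Q p ≠ 0 := hQK p hpK
  -- the compact zero set near p
  set Y : Set (EuclideanSpace ℂ (Fin n)) := Q ⁻¹' {0} ∩ closedBall p (δ/2) with hYdef
  have hYcomp : IsCompact Y :=
    (isCompact_closedBall p (δ/2)).of_isClosed_subset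
      ((isClosed_singleton.preimage hQd.continuous).inter isClosed_closedBall) inter_subset_right
  have hYU : ∀ y ∈ Y, y ∈ U \ H := by
    rintro y ⟨hy0, hyb⟩
    refine ⟨hδU hyb, fun hyH => ?_⟩
    exact hQK y (hδK y hyH hyb) hy0
  have hqY : q ∈ Y := by
    refine ⟨hQq, ?_⟩
    rw [mem_closedBall]
    linarith
  -- the clopen-piece lemma
  have hclopen_meets : ∀ A₁ B₁ : Set (EuclideanSpace ℂ (Fin n)),
      IsCompact A₁ → IsCompact B₁ → A₁ ∪ B₁ = Y → Disjoint A₁ B₁ → q ∈ A₁ →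
      (A₁ ∩ V).Nonempty := by
    intro A₁ B₁ hA hB hun hdisj hqA
    have hnv : ∀ t ∈ Set.Icc (0:ℝ) 1, ‖t • (q - p)‖ ≤ dist q p := by
      intro t ht
      rw [norm_smul, Real.norm_eq_abs, abs_of_nonneg ht.1]
      calc t * ‖q - p‖ ≤ 1 * ‖q - p‖ :=
            mul_le_mul_of_nonneg_right ht.2 (norm_nonneg _)
        _ = dist q p := by rw [one_mul, dist_eq_norm]
    have hdistt : ∀ t ∈ Set.Icc (0:ℝ) 1, ∀ x : ℂ,
        dist (φ x + t • (q - p)) (φ x) ≤ dist q p := by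
      intro t ht x
      rw [dist_eq_norm, add_sub_cancel_left]
      exact hnv t ht
    refine key_meets φ hφd hr0 hr1 hφ0 ?_ ?_ ?_ hQd hQp hQq hA hB (by rw [hun]) hdisj hqA
    · intro t ht x hx
      refine hτprop (φ x) ⟨x, hx, rfl⟩ _ ?_
      exact le_trans (hdistt t ht x) (by linarith)
    · intro x hx hne
      refine hCV ⟨?_, by simpa using hne⟩
      rw [hCeq]
      exact ⟨x, hsub1 hx, rfl⟩
    · intro t ht x hx
      rw [mem_closedBall]
      calc dist (φ x + t • (q - p)) p
          ≤ dist (φ x + t • (q - p)) (φ x) + dist (φ x) p := dist_triangle _ _ _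
        _ ≤ dist q p + dist (φ x) p := by linarith [hdistt t ht x]
        _ ≤ δ/4 + δ/4 := by linarith [hφnear x hx]
        _ = δ/2 := by ring
  -- subtype compact-space argument: q must lie in V, contradiction
  have hqV' : q ∈ V := by
    haveI hcs : CompactSpace ↥Y := isCompact_iff_compactSpace.mp hYcomp
    set q' : ↥Y := ⟨q, hqY⟩ with hq'def
    set L : Set ↥Y := {y | (y : EuclideanSpace ℂ (Fin n)) ∈ closure V} with hLdef
    have hLclosed : IsClosed L := isClosed_closure.preimage continuous_subtype_val
    have hmeet : ∀ Wc : {s : Set ↥Y // IsClopen s ∧ q' ∈ s},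
        ((Wc : Set ↥Y) ∩ L).Nonempty := by
      rintro ⟨W, hWclopen, hqW⟩
      have hA : IsCompact (Subtype.val '' W) :=
        (hWclopen.isClosed.isCompact).image continuous_subtype_val
      have hB : IsCompact (Subtype.val '' Wᶜ) :=
        ((hWclopen.compl).isClosed.isCompact).image continuous_subtype_val
      have hun : Subtype.val '' W ∪ Subtype.val '' Wᶜ = Y := by
        rw [← Set.image_union, Set.union_compl_self, Set.image_univ, Subtype.range_coe]
      have hdisj : Disjoint (Subtype.val '' W) (Subtype.val '' Wᶜ) := by
        rw [Set.disjoint_left]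
        rintro z ⟨y₁, hy₁, rfl⟩ ⟨y₂, hy₂, heq⟩
        rw [Subtype.val_injective heq] at hy₂
        exact hy₂ hy₁
      have hqA : q ∈ Subtype.val '' W := ⟨q', hqW, rfl⟩
      obtain ⟨y, hyA, hyV⟩ := hclopen_meets _ _ hA hB hun hdisj hqA
      obtain ⟨y', hy'W, rfl⟩ := hyA
      exact ⟨y', hy'W, subset_closure hyV⟩
    haveI : Nonempty {s : Set ↥Y // IsClopen s ∧ q' ∈ s} :=
      ⟨⟨Set.univ, isClopen_univ, trivial⟩⟩
    have hdir : Directed (· ⊇ ·)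
        (fun Wc : {s : Set ↥Y // IsClopen s ∧ q' ∈ s} => (Wc : Set ↥Y) ∩ L) := by
      rintro ⟨W₁, h₁, hq₁⟩ ⟨W₂, h₂, hq₂⟩
      exact ⟨⟨W₁ ∩ W₂, h₁.inter h₂, ⟨hq₁, hq₂⟩⟩,
        fun y hy => ⟨hy.1.1, hy.2⟩, fun y hy => ⟨hy.1.2, hy.2⟩⟩
    obtain ⟨a', ha'⟩ := IsCompact.nonempty_iInter_of_directed_nonempty_isCompact_isClosed
      _ hdir (fun Wc => hmeet Wc)
      (fun Wc => ((Wc.2.1.isClosed.inter hLclosed)).isCompact)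
      (fun Wc => Wc.2.1.isClosed.inter hLclosed)
    have ha'cc : a' ∈ connectedComponent q' := by
      rw [connectedComponent_eq_iInter_isClopen q']
      exact Set.mem_iInter.mpr (fun Wc => (Set.mem_iInter.mp ha' Wc).1)
    have ha'L : (a' : EuclideanSpace ℂ (Fin n)) ∈ closure V :=
      (Set.mem_iInter.mp ha' ⟨Set.univ, isClopen_univ, trivial⟩).2
    have haY : (a' : EuclideanSpace ℂ (Fin n)) ∈ Y := a'.2
    have haUH : (a' : EuclideanSpace ℂ (Fin n)) ∈ U \ H := hYU _ haY
    have haV : (a' : EuclideanSpace ℂ (Fin n)) ∈ V := by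
      have h1 : IsOpen (connectedComponentIn (U \ H) (a' : EuclideanSpace ℂ (Fin n))) :=
        hUH.connectedComponentIn
      have h2 : (a' : EuclideanSpace ℂ (Fin n)) ∈
          connectedComponentIn (U \ H) (a' : EuclideanSpace ℂ (Fin n)) :=
        mem_connectedComponentIn haUH
      obtain ⟨y, hy1, hy2⟩ :
          (connectedComponentIn (U \ H) (a' : EuclideanSpace ℂ (Fin n)) ∩ V).Nonempty :=
        mem_closure_iff.mp ha'L _ h1 h2
      have e1 := connectedComponentIn_eq hy1
      have hy2' : y ∈ connectedComponentIn (U \ H) x₀ := by rw [← hVeq]; exact hy2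
      have e2 : connectedComponentIn (U \ H) y = V := by
        rw [hVeq]
        exact (connectedComponentIn_eq hy2').symm
      rw [e1, e2] at h2
      exact h2
    have hAconn : IsPreconnected (Subtype.val '' connectedComponent q') :=
      (isPreconnected_connectedComponent).image _ continuous_subtype_val.continuousOn
    have hAsub : Subtype.val '' connectedComponent q' ⊆ U \ H := by
      rintro y ⟨y', -, rfl⟩
      exact hYU _ y'.2
    have haA : (a' : EuclideanSpace ℂ (Fin n)) ∈ Subtype.val '' connectedComponent q' :=
      ⟨a', ha'cc, rfl⟩
    have hqmem : q ∈ Subtype.val '' connectedComponent q' :=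
      ⟨q', mem_connectedComponent, rfl⟩
    have hsubcc : Subtype.val '' connectedComponent q' ⊆
        connectedComponentIn (U \ H) (a' : EuclideanSpace ℂ (Fin n)) :=
      hAconn.subset_connectedComponentIn haA hAsub
    have haV' : (a' : EuclideanSpace ℂ (Fin n)) ∈ connectedComponentIn (U \ H) x₀ := by
      rw [← hVeq]; exact haV
    have e3 : connectedComponentIn (U \ H) (a' : EuclideanSpace ℂ (Fin n)) = V := by
      rw [hVeq]
      exact (connectedComponentIn_eq haV').symm
    exact e3 ▸ hsubcc hqmem
  exact absurd hqV' hqV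

end
end

section
/- Let k ≥ 1 be an integer, let r > 0, and let f₂, …, fₙ : D_r → ℂ be holomorphic on D_r = {t ∈ ℂ : |t| < r} with fᵢ(0) = 0. Define φ : D_r × ℂ^{n-1} → ℂⁿ by φ(z₁, …, zₙ) = (z₁^k, z₂ + f₂(z₁), …, zₙ + fₙ(z₁)). Then: (a) for every neighborhood W of 0 in D_r × ℂ^{n-1}, the image φ(W) contains a neighborhood of 0 in ℂⁿ; consequently (b) if S is a holomorphic function on a neighborhood of 0 in ℂⁿ such that S(φ(z)) = 0 for all z in some neighborhood of 0, then S vanishes identically on a neighborhood of 0. -/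
open Metric

noncomputable section

lemma coord_le_norm {n : ℕ} (w : EuclideanSpace ℂ (Fin n)) (i : Fin n) : ‖w i‖ ≤ ‖w‖ := by
  rw [EuclideanSpace.norm_eq]
  rw [show ‖w i‖ = Real.sqrt (‖w i‖ ^ 2) from (Real.sqrt_sq (norm_nonneg _)).symm]
  exact Real.sqrt_le_sqrt (Finset.single_le_sum (f := fun j => ‖w j‖ ^ 2)
    (fun j _ => sq_nonneg _) (Finset.mem_univ i))

theorem puiseux_straightening_map_is_open_at_zero {n k : ℕ} [NeZero n] (hk : 1 ≤ k)
    {r : ℝ} (hr : 0 < r)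
    (f : Fin n → ℂ → ℂ)
    (hf : ∀ i : Fin n, i ≠ 0 → DifferentiableOn ℂ (f i) (ball 0 r))
    (hf0 : ∀ i : Fin n, i ≠ 0 → f i 0 = 0)
    (φ : EuclideanSpace ℂ (Fin n) → EuclideanSpace ℂ (Fin n))
    (hφ : φ = fun z => (WithLp.toLp 2 (fun j => if j = 0 then (z 0) ^ k else z j + f j (z 0)) :
      EuclideanSpace ℂ (Fin n))) :
    (∀ W : Set (EuclideanSpace ℂ (Fin n)),
      W ⊆ {z | z 0 ∈ ball (0 : ℂ) r} → W ∈ nhds (0 : EuclideanSpace ℂ (Fin n)) →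
        φ '' W ∈ nhds (0 : EuclideanSpace ℂ (Fin n))) ∧
    (∀ S : EuclideanSpace ℂ (Fin n) → ℂ,
      ∀ V ∈ nhds (0 : EuclideanSpace ℂ (Fin n)), AnalyticOnNhd ℂ S V →
        (∀ᶠ z in nhds (0 : EuclideanSpace ℂ (Fin n)), S (φ z) = 0) →
        ∀ᶠ z in nhds (0 : EuclideanSpace ℂ (Fin n)), S z = 0) := by
  have hfc : ∀ i : Fin n, i ≠ 0 → ContinuousAt (f i) 0 := fun i hi =>
    ((hf i hi).differentiableAt (isOpen_ball.mem_nhds (by simp [hr]))).continuousAt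
  have key : ∀ W : Set (EuclideanSpace ℂ (Fin n)),
      W ⊆ {z | z 0 ∈ ball (0 : ℂ) r} → W ∈ nhds (0 : EuclideanSpace ℂ (Fin n)) →
        φ '' W ∈ nhds (0 : EuclideanSpace ℂ (Fin n)) := by
    intro W _ hW
    rw [Metric.mem_nhds_iff] at hW ⊢
    obtain ⟨ε, hε, hball⟩ := hW
    set G : ℂ × EuclideanSpace ℂ (Fin n) → EuclideanSpace ℂ (Fin n) :=
      fun p => (WithLp.toLp 2 (fun j => if j = 0 then p.1 else p.2 j - f j p.1) :
        EuclideanSpace ℂ (Fin n)) with hG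
    have hGc : ContinuousAt G (0, 0) := by
      have h1 : ContinuousAt (fun p : ℂ × EuclideanSpace ℂ (Fin n) =>
          (fun j => if j = 0 then p.1 else p.2 j - f j p.1 : Fin n → ℂ)) (0, 0) := by
        apply continuousAt_pi.2
        intro j
        by_cases hj : j = 0
        · simp only [if_pos hj]; exact continuousAt_fst
        · simp only [if_neg hj]
          have h2 : ContinuousAt (fun p : ℂ × EuclideanSpace ℂ (Fin n) => f j p.1)
              ((0 : ℂ), (0 : EuclideanSpace ℂ (Fin n))) :=
            ContinuousAt.comp (hfc j hj) continuousAt_fst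
          have h3 : ContinuousAt (fun p : ℂ × EuclideanSpace ℂ (Fin n) => p.2 j)
              ((0 : ℂ), (0 : EuclideanSpace ℂ (Fin n))) :=
            ContinuousAt.comp ((EuclideanSpace.proj j).continuous.continuousAt) continuousAt_snd
          exact h3.sub h2
      exact ((PiLp.continuous_toLp (p := 2) (β := fun _ : Fin n => ℂ)).continuousAt).comp h1
    have hG0 : G (0, 0) = 0 := by
      ext j
      show (if j = 0 then (0 : ℂ) else (0 : EuclideanSpace ℂ (Fin n)) j - f j 0) = 0
      by_cases hj : j = 0
      · simp [hj]
      · simp [hj, hf0 j hj]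
    rw [Metric.continuousAt_iff] at hGc
    obtain ⟨δ₁, hδ₁, hδimp⟩ := hGc ε hε
    refine ⟨min δ₁ (δ₁ ^ k), lt_min hδ₁ (pow_pos hδ₁ k), ?_⟩
    intro w hw
    have hwn : ‖w‖ < min δ₁ (δ₁ ^ k) := by simpa [mem_ball, dist_zero_right] using hw
    obtain ⟨t, ht⟩ := IsAlgClosed.exists_pow_nat_eq (w 0) (lt_of_lt_of_le one_pos hk)
    have htn : ‖t‖ < δ₁ := by
      have h2 : ‖t‖ ^ k = ‖w 0‖ := by rw [← norm_pow, ht]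
      have h3 : ‖t‖ ^ k < δ₁ ^ k := by
        rw [h2]
        exact lt_of_le_of_lt (coord_le_norm w 0) (lt_of_lt_of_le hwn (min_le_right _ _))
      exact lt_of_pow_lt_pow_left₀ k hδ₁.le h3
    have hdist : dist (t, w) ((0 : ℂ), (0 : EuclideanSpace ℂ (Fin n))) < δ₁ := by
      rw [Prod.dist_eq]
      simp only [dist_zero_right]
      exact max_lt htn (lt_of_lt_of_le hwn (min_le_left _ _))
    have hz : G (t, w) ∈ ball (0 : EuclideanSpace ℂ (Fin n)) ε := by
      have := hδimp hdist
      rw [hG0] at this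
      simpa [mem_ball] using this
    refine ⟨G (t, w), hball hz, ?_⟩
    have hGt0 : G (t, w) 0 = t :=
      show (if (0 : Fin n) = 0 then t else w 0 - f 0 t) = t from if_pos rfl
    have hGtj : ∀ j : Fin n, j ≠ 0 → G (t, w) j = w j - f j t := fun j hj => if_neg hj
    rw [hφ]
    ext j
    show (if j = 0 then (G (t, w) 0) ^ k else G (t, w) j + f j (G (t, w) 0)) = w j
    by_cases hj : j = 0
    · subst hj
      rw [if_pos rfl, hGt0, ht]
    · rw [if_neg hj, hGt0, hGtj j hj]
      exact sub_add_cancel _ _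
  refine ⟨key, ?_⟩
  intro S V hV hSan hev
  obtain ⟨W', hW', hS0⟩ := hev.exists_mem
  have hopen : IsOpen {z : EuclideanSpace ℂ (Fin n) | z 0 ∈ ball (0 : ℂ) r} :=
    isOpen_ball.preimage (EuclideanSpace.proj (0 : Fin n)).continuous
  have h0mem : (0 : EuclideanSpace ℂ (Fin n)) ∈
      {z : EuclideanSpace ℂ (Fin n) | z 0 ∈ ball (0 : ℂ) r} := by
    simp [hr]
  have hWnhds : W' ∩ {z : EuclideanSpace ℂ (Fin n) | z 0 ∈ ball (0 : ℂ) r} ∈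
      nhds (0 : EuclideanSpace ℂ (Fin n)) :=
    Filter.inter_mem hW' (hopen.mem_nhds h0mem)
  have himg := key _ Set.inter_subset_right hWnhds
  filter_upwards [himg]
  rintro z hz
  obtain ⟨y, hy, rfl⟩ := hz
  exact hS0 y hy.1
end
end

section
/- Let K ⊂ ℂⁿ be compact and let Φ : [0,1] × closure(𝔻) → ℂⁿ be continuous, where 𝔻 is the open unit disc in ℂ, such that for every t ∈ [0,1] the map Φ(t, ·) is holomorphic on 𝔻 and Φ(t, ∂𝔻) ⊆ K, and such that Φ(0, ·) is a constant map. Then Φ(1, closure(𝔻)) ⊆ K̂_rat; that is, the final disc of a continuous family of analytic discs attached to K that starts at a constant disc is contained in the rational hull of K. -/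
open Metric

noncomputable section

private lemma mvpoly_differentiable {n : ℕ} (P : MvPolynomial (Fin n) ℂ) :
    Differentiable ℂ (fun x : Fin n → ℂ => MvPolynomial.eval x P) := by
  induction P using MvPolynomial.induction_on with
  | C a => simpa using differentiable_const a
  | add p q hp hq => simp only [map_add]; exact hp.add hq
  | mul_X p i hp =>
      have hx : Differentiable ℂ (fun x : Fin n → ℂ => x i) := differentiable_pi.mp differentiable_id i
      simp only [map_mul, MvPolynomial.eval_X]; exact hp.mul hx

theorem continuous_family_of_discs_in_rational_hull {n : ℕ}
    (K : Set (EuclideanSpace ℂ (Fin n))) (hK : IsCompact K)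
    (Φ : ℝ → ℂ → EuclideanSpace ℂ (Fin n))
    (hcont : ContinuousOn (fun p : ℝ × ℂ => Φ p.1 p.2)
      (Set.Icc (0 : ℝ) 1 ×ˢ closedBall (0 : ℂ) 1))
    (hhol : ∀ t ∈ Set.Icc (0 : ℝ) 1, DifferentiableOn ℂ (Φ t) (ball 0 1))
    (hbd : ∀ t ∈ Set.Icc (0 : ℝ) 1, Φ t '' sphere 0 1 ⊆ K)
    (hconst : ∃ c : EuclideanSpace ℂ (Fin n), ∀ ζ ∈ closedBall (0 : ℂ) 1, Φ 0 ζ = c) :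
    Φ 1 '' closedBall 0 1 ⊆ ratHull K := by
  rintro z ⟨ζ₀, hζ₀, rfl⟩
  intro P
  set ev : EuclideanSpace ℂ (Fin n) → ℂ := fun x => MvPolynomial.eval (fun i => x i) P with hev_def
  show ev (Φ 1 ζ₀) ∈ ev '' K
  by_contra hw
  obtain ⟨c, hc⟩ := hconst
  set w : ℂ := ev (Φ 1 ζ₀) with hw_def
  -- differentiability and continuity of ev
  have hev_diff : Differentiable ℂ ev :=
    (mvpoly_differentiable P).comp
      (PiLp.continuousLinearEquiv 2 ℂ (fun _ : Fin n => ℂ)).differentiable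
  have hev_cont : Continuous ev := hev_diff.continuous
  have h0I : (0:ℝ) ∈ Set.Icc (0:ℝ) 1 := by norm_num
  have h1I : (1:ℝ) ∈ Set.Icc (0:ℝ) 1 := by norm_num
  have h1s : (1:ℂ) ∈ sphere (0:ℂ) 1 := by simp
  have hKne : K.Nonempty := ⟨Φ 0 1, hbd 0 h0I ⟨1, h1s, rfl⟩⟩
  have himg : IsCompact (ev '' K) := hK.image hev_cont
  set δ := Metric.infDist w (ev '' K) with hδ_def
  have hδ : 0 < δ := (himg.isClosed.notMem_iff_infDist_pos (hKne.image ev)).1 hw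
  -- boundary lower bound
  have hbnd : ∀ t ∈ Set.Icc (0:ℝ) 1, ∀ ζ ∈ sphere (0:ℂ) 1, δ ≤ ‖ev (Φ t ζ) - w‖ := by
    intro t ht ζ hζ
    have hmem : ev (Φ t ζ) ∈ ev '' K := ⟨Φ t ζ, hbd t ht ⟨ζ, hζ, rfl⟩, rfl⟩
    calc δ ≤ dist w (ev (Φ t ζ)) := Metric.infDist_le_dist_of_mem hmem
      _ = ‖ev (Φ t ζ) - w‖ := by rw [dist_comm, dist_eq_norm]
  -- continuity of slices
  have hslice : ∀ t ∈ Set.Icc (0:ℝ) 1, ContinuousOn (Φ t) (closedBall 0 1) := by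
    intro t ht
    have : ContinuousOn ((fun p : ℝ × ℂ => Φ p.1 p.2) ∘ (fun ζ : ℂ => ((t, ζ) : ℝ × ℂ)))
        (closedBall 0 1) :=
      hcont.comp ((continuous_const.prodMk continuous_id).continuousOn)
        (fun ζ hζ => ⟨ht, hζ⟩)
    exact this
  have htslice : ∀ ζ ∈ closedBall (0:ℂ) 1, ContinuousOn (fun t => Φ t ζ) (Set.Icc (0:ℝ) 1) := by
    intro ζ hζ
    have : ContinuousOn ((fun p : ℝ × ℂ => Φ p.1 p.2) ∘ (fun t : ℝ => ((t, ζ) : ℝ × ℂ)))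
        (Set.Icc (0:ℝ) 1) :=
      hcont.comp ((continuous_id.prodMk continuous_const).continuousOn)
        (fun t ht => ⟨ht, hζ⟩)
    exact this
  -- minimum modulus: nonvanishing implies uniform lower bound δ
  have hmin : ∀ t ∈ Set.Icc (0:ℝ) 1, (∀ ζ ∈ closedBall (0:ℂ) 1, ev (Φ t ζ) ≠ w) →
      ∀ ζ ∈ closedBall (0:ℂ) 1, δ ≤ ‖ev (Φ t ζ) - w‖ := by
    intro t ht hnz ζ hζ
    have hnz' : ∀ ζ' ∈ closedBall (0:ℂ) 1, ev (Φ t ζ') - w ≠ 0 :=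
      fun ζ' hζ' => sub_ne_zero.2 (hnz ζ' hζ')
    have hFd : DifferentiableOn ℂ (fun ζ' => ev (Φ t ζ') - w) (ball 0 1) :=
      (hev_diff.comp_differentiableOn (hhol t ht)).sub_const w
    have hFc : ContinuousOn (fun ζ' => ev (Φ t ζ') - w) (closedBall 0 1) :=
      (hev_cont.comp_continuousOn (hslice t ht)).sub continuousOn_const
    have hgd : DifferentiableOn ℂ (fun ζ' => (ev (Φ t ζ') - w)⁻¹) (ball 0 1) :=
      hFd.inv (fun ζ' hζ' => hnz' ζ' (ball_subset_closedBall hζ'))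
    have hgc : ContinuousOn (fun ζ' => (ev (Φ t ζ') - w)⁻¹) (closedBall 0 1) :=
      hFc.inv₀ hnz'
    have hcl : closure (ball (0:ℂ) 1) = closedBall 0 1 := closure_ball 0 one_ne_zero
    have hmax : ‖(ev (Φ t ζ) - w)⁻¹‖ ≤ δ⁻¹ := by
      refine Complex.norm_le_of_forall_mem_frontier_norm_le isBounded_ball
        ⟨hgd, by rwa [hcl]⟩ ?_ (by rw [hcl]; exact hζ)
      intro ζ' hζ'
      rw [frontier_ball (0:ℂ) one_ne_zero] at hζ'
      rw [norm_inv]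
      exact inv_anti₀ hδ (hbnd t ht ζ' hζ')
    have hpos : (0:ℝ) < ‖ev (Φ t ζ) - w‖ := norm_pos_iff.2 (hnz' ζ hζ)
    rw [norm_inv] at hmax
    exact (inv_le_inv₀ hpos hδ).1 hmax
  -- the good set
  set S : Set ℝ := {t | t ∈ Set.Icc (0:ℝ) 1 ∧ ∀ ζ ∈ closedBall (0:ℂ) 1, ev (Φ t ζ) ≠ w}
    with hS_def
  -- S is closed
  have hSeq : S = ⋂ ζ ∈ closedBall (0:ℂ) 1,
      (Set.Icc (0:ℝ) 1 ∩ (fun t => ‖ev (Φ t ζ) - w‖) ⁻¹' Set.Ici δ) := by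
    ext t
    simp only [Set.mem_iInter, Set.mem_inter_iff, Set.mem_preimage, Set.mem_Ici, hS_def,
      Set.mem_setOf_eq]
    constructor
    · rintro ⟨ht, hnz⟩ ζ hζ
      exact ⟨ht, hmin t ht hnz ζ hζ⟩
    · intro h
      have ht : t ∈ Set.Icc (0:ℝ) 1 := (h 0 (mem_closedBall_self zero_le_one)).1
      refine ⟨ht, fun ζ hζ => ?_⟩
      have := (h ζ hζ).2
      intro he
      rw [he, sub_self, norm_zero] at this
      exact absurd this (not_le.2 hδ)
  have hSclosed : IsClosed S := by
    rw [hSeq]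
    refine isClosed_biInter (fun ζ hζ => ?_)
    have hcont' : ContinuousOn (fun t => ‖ev (Φ t ζ) - w‖) (Set.Icc (0:ℝ) 1) :=
      ((hev_cont.comp_continuousOn (htslice ζ hζ)).sub continuousOn_const).norm
    exact hcont'.preimage_isClosed_of_isClosed isClosed_Icc isClosed_Ici
  -- S is nonempty: 0 ∈ S
  have hcK : c ∈ K := by
    have : Φ 0 1 = c := hc 1 (sphere_subset_closedBall h1s)
    exact this ▸ hbd 0 h0I ⟨1, h1s, rfl⟩
  have h0S : (0:ℝ) ∈ S := by
    refine ⟨h0I, fun ζ hζ => ?_⟩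
    rw [hc ζ hζ]
    intro he
    exact hw (he ▸ ⟨c, hcK, rfl⟩)
  have hSbdd : BddAbove S := ⟨1, fun t ht => ht.1.2⟩
  set τ := sSup S with hτ_def
  have hτS : τ ∈ S := hSclosed.csSup_mem ⟨0, h0S⟩ hSbdd
  -- τ = 1 is impossible
  have hτne : τ ≠ 1 := by
    intro h1
    have := hτS.2 ζ₀ hζ₀
    rw [h1] at this
    exact this rfl
  have hτlt : τ < 1 := lt_of_le_of_ne hτS.1.2 hτne
  -- openness via compact bad set
  set B : Set ℝ := Prod.fst '' {p ∈ Set.Icc (0:ℝ) 1 ×ˢ closedBall (0:ℂ) 1 |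
      ev (Φ p.1 p.2) = w} with hB_def
  have hZclosed : IsClosed {p ∈ Set.Icc (0:ℝ) 1 ×ˢ closedBall (0:ℂ) 1 | ev (Φ p.1 p.2) = w} := by
    have hGc : ContinuousOn (fun p : ℝ × ℂ => ev (Φ p.1 p.2))
        (Set.Icc (0:ℝ) 1 ×ˢ closedBall (0:ℂ) 1) := hev_cont.comp_continuousOn hcont
    have := hGc.preimage_isClosed_of_isClosed
      (isClosed_Icc.prod Metric.isClosed_closedBall) (isClosed_singleton (x := w))
    convert this using 1
    rfl
  have hZcompact : IsCompact {p ∈ Set.Icc (0:ℝ) 1 ×ˢ closedBall (0:ℂ) 1 |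
      ev (Φ p.1 p.2) = w} :=
    ((isCompact_Icc.prod (isCompact_closedBall 0 1))).of_isClosed_subset hZclosed
      (fun p hp => hp.1)
  have hBcompact : IsCompact B := hZcompact.image continuous_fst
  have hτB : τ ∉ B := by
    rintro ⟨p, hp, hpe⟩
    exact hτS.2 p.2 hp.1.2 (hpe ▸ hp.2)
  obtain ⟨ε, hε, hball⟩ := Metric.isOpen_iff.1 hBcompact.isClosed.isOpen_compl τ hτB
  set t' := min (τ + ε/2) 1 with ht'_def
  have hτt' : τ < t' := lt_min (by linarith) hτlt
  have ht'I : t' ∈ Set.Icc (0:ℝ) 1 := ⟨le_trans hτS.1.1 hτt'.le, min_le_right _ _⟩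
  have ht'B : t' ∉ B := by
    apply hball
    rw [mem_ball, Real.dist_eq, abs_lt]
    constructor
    · have : τ ≤ t' := hτt'.le
      linarith
    · have : t' ≤ τ + ε/2 := min_le_left _ _
      linarith
  have ht'S : t' ∈ S := by
    refine ⟨ht'I, fun ζ hζ => ?_⟩
    intro he
    exact ht'B ⟨(t', ζ), ⟨⟨ht'I, hζ⟩, he⟩, rfl⟩
  exact absurd (le_csSup hSbdd ht'S) (not_le.2 hτt')
end
end

section
/- Let H = {(z, w) ∈ ℂ² : |z| = |w|} (the singular Levi-flat cone), let r > 0, and let K = {(z, w) ∈ H : |z|² + |w|² ≤ r²}, a compact subset of H. Then the rational hull K̂_rat contains the open Euclidean ball of radius r/2 centered at the origin of ℂ². -/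
open Metric

noncomputable section

open Polynomial MvPolynomial Complex

namespace ConeHull

lemma abs_of_sphere {z : ℂ} (hz : z ∈ sphere (0:ℂ) 1) : ‖z‖ = 1 := by
  simpa using mem_sphere_zero_iff_norm.mp hz

lemma integral_sub_inv_outside {r : ℂ} (h : 1 < ‖r‖) :
    (∮ z in C((0:ℂ),1), (z - r)⁻¹) = 0 := by
  apply circleIntegral_eq_zero_of_differentiable_on_off_countable
    (zero_le_one) (Set.countable_empty)
  · intro z hz
    have : z ≠ r := by
      intro hzr; subst hzr
      have := mem_closedBall_zero_iff.mp hz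
      linarith
    exact ((continuous_id.sub continuous_const).continuousAt).continuousWithinAt.inv₀
      (sub_ne_zero.mpr this)
  · intro z hz
    have hz' : ‖z‖ < 1 := by
      have := mem_ball_zero_iff.mp hz.1
      exact this
    have : z - r ≠ 0 := sub_ne_zero.mpr (by intro h'; subst h'; linarith)
    exact (differentiable_id.sub (differentiable_const r)).differentiableAt.inv this

/-- winding integral of a polynomial over the unit circle -/
def wind (p : Polynomial ℂ) : ℂ :=
  ∮ z in C((0:ℂ), 1), Polynomial.eval z (Polynomial.derivative p) / Polynomial.eval z p

def rootCount (p : Polynomial ℂ) : ℕ :=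
  (p.roots.filter (fun r => ‖r‖ < 1)).card

lemma wind_eq (n : ℕ) : ∀ (p : Polynomial ℂ), p.natDegree = n →
    (∀ z : ℂ, ‖z‖ = 1 → Polynomial.eval z p ≠ 0) →
    wind p = (2 * Real.pi * Complex.I) * (rootCount p : ℂ) := by
  induction n using Nat.strong_induction_on with
  | _ n ih =>
    intro p hdeg hp
    have hp0 : p ≠ 0 := fun h => hp 1 (by simp) (by simp [h])
    rcases Nat.eq_zero_or_pos n with hn | hn
    · -- constant polynomial
      subst hn
      obtain ⟨c, rfl⟩ := Polynomial.natDegree_eq_zero.mp hdeg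
      have : wind (Polynomial.C c) = 0 := by
        unfold wind
        have : (fun z : ℂ => Polynomial.eval z (Polynomial.derivative (Polynomial.C c)) /
            Polynomial.eval z (Polynomial.C c)) = fun _ => (0:ℂ) := by
          funext z; simp
        rw [this]
        simp [circleIntegral]
      rw [this, rootCount, Polynomial.roots_C]
      simp
    · -- there is a root
      have hdegpos : 0 < p.degree := by
        rw [Polynomial.degree_eq_natDegree hp0, hdeg]
        exact_mod_cast hn
      obtain ⟨r, hr⟩ := Complex.exists_root hdegpos
      set q := p / (Polynomial.X - Polynomial.C r) with hq
      have hfact : (Polynomial.X - Polynomial.C r) * q = p :=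
        Polynomial.mul_div_eq_iff_isRoot.mpr hr
      have hq0 : q ≠ 0 := by
        intro h; rw [h, mul_zero] at hfact; exact hp0 hfact.symm
      have hqdeg : q.natDegree = n - 1 := by
        have := Polynomial.natDegree_mul (p := Polynomial.X - Polynomial.C r) (q := q)
          (Polynomial.X_sub_C_ne_zero r) hq0
        rw [hfact, hdeg, Polynomial.natDegree_X_sub_C] at this
        omega
      have hqcirc : ∀ z : ℂ, ‖z‖ = 1 → Polynomial.eval z q ≠ 0 := by
        intro z hz h
        apply hp z hz
        rw [← hfact]; simp [h]
      have hrne : ∀ z : ℂ, ‖z‖ = 1 → z ≠ r := by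
        intro z hz h
        apply hp z hz
        rw [← hfact, h]; simp
      have hr1 : ‖r‖ ≠ 1 := fun h => hrne r h rfl
      have heqon : Set.EqOn
          (fun z : ℂ => Polynomial.eval z (Polynomial.derivative p) / Polynomial.eval z p)
          (fun z : ℂ => (z - r)⁻¹ +
            Polynomial.eval z (Polynomial.derivative q) / Polynomial.eval z q)
          (sphere (0:ℂ) 1) := by
        intro z hz
        have hz1 := abs_of_sphere hz
        have hzr : z - r ≠ 0 := sub_ne_zero.mpr (hrne z hz1)
        have hqz : Polynomial.eval z q ≠ 0 := hqcirc z hz1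
        simp only [← hfact, Polynomial.derivative_mul, Polynomial.derivative_X_sub_C, one_mul,
          Polynomial.eval_add, Polynomial.eval_mul, Polynomial.eval_sub, Polynomial.eval_X,
          Polynomial.eval_C]
        field_simp
      have hint1 : CircleIntegrable (fun z : ℂ => (z - r)⁻¹) 0 1 := by
        apply ContinuousOn.circleIntegrable (by norm_num)
        intro z hz
        exact ((continuous_id.sub continuous_const).continuousAt).continuousWithinAt.inv₀
          (sub_ne_zero.mpr (hrne z (abs_of_sphere hz)))
      have hint2 : CircleIntegrable (fun z : ℂ =>
          Polynomial.eval z (Polynomial.derivative q) / Polynomial.eval z q) 0 1 := by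
        apply ContinuousOn.circleIntegrable (by norm_num)
        exact ContinuousOn.div (Polynomial.continuous _).continuousOn
          (Polynomial.continuous _).continuousOn
          (fun z hz => hqcirc z (abs_of_sphere hz))
      have hsplit : wind p = (∮ z in C((0:ℂ),1), (z - r)⁻¹) + wind q := by
        unfold wind
        rw [circleIntegral.integral_congr (by norm_num) heqon]
        simp only [circleIntegral, smul_add]
        exact intervalIntegral.integral_add hint1.out hint2.out
      have hcount : (rootCount p : ℂ) =
          (if ‖r‖ < 1 then 1 else 0) + (rootCount q : ℂ) := by
        have hroots : p.roots = r ::ₘ q.roots := by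
          rw [← hfact, Polynomial.roots_mul (hfact.symm ▸ hp0), Polynomial.roots_X_sub_C]
          rfl
        rw [rootCount, rootCount, hroots, Multiset.filter_cons]
        split_ifs with h
        · rw [Multiset.card_add, Multiset.card_singleton]
          push_cast
          ring
        · simp
      have hwq : wind q = (2 * Real.pi * Complex.I) * (rootCount q : ℂ) :=
        ih (n-1) (by omega) q hqdeg hqcirc
      rw [hsplit, hwq, hcount]
      rcases lt_or_gt_of_ne hr1 with h | h
      · rw [if_pos h, circleIntegral.integral_sub_inv_of_mem_ball
          (by simpa using mem_ball_zero_iff.mpr (by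
            exact h))]
        ring
      · rw [if_neg (not_lt.mpr h.le), integral_sub_inv_outside h]
        ring


/-- substitute `X 0 := t`, `X 1 := X` into a 2-variable polynomial -/
def toPoly (t : ℂ) (S : MvPolynomial (Fin 2) ℂ) : Polynomial ℂ :=
  MvPolynomial.aeval ![Polynomial.C t, Polynomial.X] S

lemma eval_toPoly (t z : ℂ) (S : MvPolynomial (Fin 2) ℂ) :
    Polynomial.eval z (toPoly t S) = MvPolynomial.eval ![t, z] S := by
  unfold toPoly
  induction S using MvPolynomial.induction_on with
  | C a => simp
  | add p q hp hq => simp [hp, hq]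
  | mul_X p i hp =>
    fin_cases i <;> simp [hp]

lemma derivative_toPoly (t : ℂ) (S : MvPolynomial (Fin 2) ℂ) :
    Polynomial.derivative (toPoly t S) = toPoly t (MvPolynomial.pderiv 1 S) := by
  unfold toPoly
  induction S using MvPolynomial.induction_on with
  | C a => simp
  | add p q hp hq => simp [hp, hq]
  | mul_X p i hp =>
    fin_cases i <;>
      simp [MvPolynomial.pderiv_mul, Polynomial.derivative_mul, hp, MvPolynomial.pderiv_X] <;>
      ring

lemma eval_mv_aeval (v : Fin 2 → ℂ) (g : Fin 2 → MvPolynomial (Fin 2) ℂ)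
    (Q : MvPolynomial (Fin 2) ℂ) :
    MvPolynomial.eval v (MvPolynomial.aeval g Q) =
      MvPolynomial.eval (fun i => MvPolynomial.eval v (g i)) Q := by
  induction Q using MvPolynomial.induction_on with
  | C a => simp
  | add p q hp hq => simp only [map_add, hp, hq]
  | mul_X p i hp => simp only [map_mul, MvPolynomial.aeval_X, MvPolynomial.eval_X, hp]

/-- MAIN homotopy lemma: if `S(t, ζ)` never vanishes for `t ∈ [0,1]`, `|ζ| = 1`, and
`S(0, ·)` has no zeros in the closed disc, then `S(1, ·)` has no zeros in the open disc. -/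
lemma no_root_of_homotopy (S : MvPolynomial (Fin 2) ℂ)
    (h : ∀ t : ℝ, t ∈ Set.Icc (0:ℝ) 1 → ∀ z : ℂ, ‖z‖ = 1 →
      MvPolynomial.eval ![(t:ℂ), z] S ≠ 0)
    (h0 : ∀ z : ℂ, ‖z‖ ≤ 1 → MvPolynomial.eval ![(0:ℂ), z] S ≠ 0)
    (c : ℂ) (hc : ‖c‖ < 1) :
    MvPolynomial.eval ![(1:ℂ), c] S ≠ 0 := by
  set P : ℝ → Polynomial ℂ := fun t => toPoly ((t : ℂ)) S with hP
  have hPcirc : ∀ t : ℝ, t ∈ Set.Icc (0:ℝ) 1 → ∀ z : ℂ, ‖z‖ = 1 →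
      Polynomial.eval z (P t) ≠ 0 := by
    intro t ht z hz
    rw [hP, eval_toPoly]
    exact h t ht z hz
  set X := Set.Icc (0:ℝ) 1 with hX
  haveI : PreconnectedSpace X := Subtype.preconnectedSpace isPreconnected_Icc
  set F : X → ℂ := fun x => wind (P x.1) with hF
  have hFval : ∀ x : X, F x = (2 * Real.pi * Complex.I) * (rootCount (P x.1) : ℂ) := by
    intro x
    exact wind_eq (P x.1).natDegree (P x.1) rfl (hPcirc x.1 x.2)
  -- continuity
  have hFcont : Continuous F := by
    have hD : ∀ p : X × ℝ, MvPolynomial.eval ![((p.1 : ℝ) : ℂ), circleMap 0 1 p.2] S ≠ 0 := by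
      intro p
      exact h p.1 p.1.2 _ (by simpa using norm_circleMap_zero 1 p.2)
    have hv : Continuous fun p : X × ℝ =>
        (![((p.1 : ℝ) : ℂ), circleMap 0 1 p.2] : Fin 2 → ℂ) := by
      apply continuous_pi
      intro i
      fin_cases i
      · exact Complex.continuous_ofReal.comp (continuous_subtype_val.comp continuous_fst)
      · exact (continuous_circleMap 0 1).comp continuous_snd
    have hnum : Continuous fun p : X × ℝ =>
        MvPolynomial.eval ![((p.1 : ℝ) : ℂ), circleMap 0 1 p.2] (MvPolynomial.pderiv 1 S) :=
      (MvPolynomial.continuous_eval (MvPolynomial.pderiv 1 S)).comp hv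
    have hden : Continuous fun p : X × ℝ =>
        MvPolynomial.eval ![((p.1 : ℝ) : ℂ), circleMap 0 1 p.2] S :=
      (MvPolynomial.continuous_eval S).comp hv
    have hderiv : Continuous fun p : X × ℝ => deriv (circleMap 0 1) p.2 := by
      simp only [deriv_circleMap]
      exact (((continuous_circleMap 0 1).comp continuous_snd).mul continuous_const)
    have hfcont : Continuous (Function.uncurry fun (x : X) (θ : ℝ) =>
        deriv (circleMap 0 1) θ •
          (MvPolynomial.eval ![((x : ℝ) : ℂ), circleMap 0 1 θ] (MvPolynomial.pderiv 1 S) /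
            MvPolynomial.eval ![((x : ℝ) : ℂ), circleMap 0 1 θ] S)) := by
      exact hderiv.smul (hnum.div hden hD)
    have := intervalIntegral.continuous_parametric_intervalIntegral_of_continuous'
      (μ := MeasureTheory.volume) hfcont 0 (2 * Real.pi)
    convert this using 1
    funext x
    simp only [hF, wind, circleIntegral, hP, derivative_toPoly, eval_toPoly]
  -- clopen argument
  have hnorm : ∀ x : X, F x ≠ 0 → 2 * Real.pi ≤ ‖F x‖ := by
    intro x hx
    rw [hFval x] at hx ⊢
    have hrc : rootCount (P x.1) ≠ 0 := by
      intro h0; exact hx (by rw [h0]; simp)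
    have h1 : (1:ℝ) ≤ (rootCount (P x.1) : ℝ) := by
      exact_mod_cast Nat.one_le_iff_ne_zero.mpr hrc
    have : ‖(2 * Real.pi * Complex.I) * (rootCount (P x.1) : ℂ)‖ =
        (2 * Real.pi) * (rootCount (P x.1) : ℝ) := by
      rw [norm_mul, norm_mul, norm_mul]
      simp [Complex.norm_real, abs_of_pos Real.pi_pos]
    rw [this]
    nlinarith [Real.pi_pos]
  set A : Set X := F ⁻¹' {0} with hA
  have hAopen : IsOpen A := by
    have : A = F ⁻¹' (ball 0 (2 * Real.pi)) := by
      ext x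
      simp only [hA, Set.mem_preimage, Set.mem_singleton_iff, mem_ball,
        dist_zero_right]
      constructor
      · intro hx; rw [hx]; simpa using by positivity
      · intro hx
        by_contra hne
        exact absurd hx (not_lt.mpr (hnorm x hne))
    rw [this]
    exact isOpen_ball.preimage hFcont
  have hAclosed : IsClosed A := isClosed_singleton.preimage hFcont
  have hPne : ∀ t : ℝ, t ∈ Set.Icc (0:ℝ) 1 → P t ≠ 0 := by
    intro t ht h0
    exact hPcirc t ht 1 (by simp) (by rw [h0]; simp)
  have hx0 : (⟨0, by simp [hX]⟩ : X) ∈ A := by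
    have : rootCount (P 0) = 0 := by
      rw [rootCount, Multiset.card_eq_zero, Multiset.filter_eq_nil]
      intro ρ hρ hρ1
      have hiroot := (Polynomial.mem_roots (hPne 0 (by norm_num))).mp hρ
      apply h0 ρ hρ1.le
      rw [← eval_toPoly]
      simpa [hP] using hiroot
    simp only [hA, Set.mem_preimage, Set.mem_singleton_iff]
    rw [hFval, this]
    simp
  have hAuniv : A = Set.univ := IsClopen.eq_univ ⟨hAclosed, hAopen⟩ ⟨_, hx0⟩
  have hx1 : F ⟨1, by simp [hX]⟩ = 0 := by
    have : (⟨1, by simp [hX]⟩ : X) ∈ A := hAuniv ▸ Set.mem_univ _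
    simpa [hA] using this
  rw [hFval] at hx1
  have h2pi : (2 * Real.pi * Complex.I : ℂ) ≠ 0 := by
    simp [Real.pi_ne_zero, Complex.I_ne_zero]
  have hrc1 : rootCount (P 1) = 0 := by
    have := (mul_eq_zero.mp hx1).resolve_left h2pi
    exact_mod_cast this
  intro hcontra
  have hcroot : c ∈ (P 1).roots := by
    rw [Polynomial.mem_roots (hPne 1 (by norm_num))]
    show Polynomial.eval c (P 1) = 0
    rw [hP, eval_toPoly]
    simpa using hcontra
  have : c ∈ (P 1).roots.filter (fun r => ‖r‖ < 1) :=
    Multiset.mem_filter.mpr ⟨hcroot, hc⟩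
  have : (P 1).roots.filter (fun r => ‖r‖ < 1) ≠ 0 :=
    fun h => by simp [h] at this
  rw [rootCount, Multiset.card_eq_zero] at hrc1
  exact this hrc1


lemma core (Q : MvPolynomial (Fin 2) ℂ) (a b : ℂ) (hba : ‖b‖ ≤ ‖a‖)
    (hQ : ∀ z w : ℂ, ‖z‖ = ‖w‖ → ‖z‖ ≤ ‖a‖ →
      MvPolynomial.eval ![z, w] Q ≠ 0) :
    MvPolynomial.eval ![a, b] Q ≠ 0 := by
  rcases eq_or_lt_of_le hba with heq | hlt
  · exact hQ a b heq.symm le_rfl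
  · have hapos : 0 < ‖a‖ := lt_of_le_of_lt (norm_nonneg b) hlt
    have ha : a ≠ 0 := by
      intro h; rw [h] at hapos; simp at hapos
    set c := b / a with hcdef
    have hc : ‖c‖ < 1 := by
      rw [hcdef, norm_div, div_lt_one hapos]; exact hlt
    set S := MvPolynomial.aeval ![MvPolynomial.C a * MvPolynomial.X (0 : Fin 2),
      (MvPolynomial.C a * MvPolynomial.X (0 : Fin 2)) * MvPolynomial.X (1 : Fin 2)] Q with hSdef
    have hS : ∀ t z : ℂ, MvPolynomial.eval ![t, z] S =
        MvPolynomial.eval ![a * t, a * t * z] Q := by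
      intro t z
      rw [hSdef, eval_mv_aeval]
      have hfun : (fun i => MvPolynomial.eval ![t, z]
          ((![MvPolynomial.C a * MvPolynomial.X (0 : Fin 2),
            (MvPolynomial.C a * MvPolynomial.X (0 : Fin 2)) * MvPolynomial.X (1 : Fin 2)]) i)) =
          ![a * t, a * t * z] := by
        funext i
        fin_cases i <;> simp
      rw [hfun]
    have key := no_root_of_homotopy S ?_ ?_ c hc
    · rw [hS] at key
      have hb : a * c = b := by
        rw [hcdef, mul_div_cancel₀ _ ha]
      simp only [mul_one] at key
      rwa [hb] at key
    · intro t ht z hz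
      rw [hS]
      apply hQ
      · rw [norm_mul (a * (t:ℂ)) z, hz, mul_one]
      · rw [norm_mul, Complex.norm_real, Real.norm_eq_abs, _root_.abs_of_nonneg ht.1]
        calc ‖a‖ * t ≤ ‖a‖ * 1 :=
              mul_le_mul_of_nonneg_left ht.2 (norm_nonneg a)
        _ = ‖a‖ := mul_one _
    · intro z _
      rw [hS, mul_zero, zero_mul]
      exact hQ 0 0 rfl (by simpa using hapos.le)

lemma eval_swap (Q : MvPolynomial (Fin 2) ℂ) (z w : ℂ) :
    MvPolynomial.eval ![z, w]
      (MvPolynomial.aeval ![MvPolynomial.X (1 : Fin 2), MvPolynomial.X (0 : Fin 2)] Q) =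
      MvPolynomial.eval ![w, z] Q := by
  rw [eval_mv_aeval]
  have hfun : (fun i => MvPolynomial.eval ![z, w]
      ((![MvPolynomial.X (1 : Fin 2), MvPolynomial.X (0 : Fin 2)] :
        Fin 2 → MvPolynomial (Fin 2) ℂ) i)) = ![w, z] := by
    funext i
    fin_cases i <;> simp
  rw [hfun]

end ConeHull

theorem cone_rational_hull_contains_ball {r : ℝ} (hr : 0 < r)
    (H K : Set (EuclideanSpace ℂ (Fin 2)))
    (hHdef : H = {p | ‖p 0‖ = ‖p 1‖})
    (hKdef : K = {p | p ∈ H ∧ ‖p 0‖ ^ 2 + ‖p 1‖ ^ 2 ≤ r ^ 2}) :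
    ball (0 : EuclideanSpace ℂ (Fin 2)) (r / 2) ⊆ ratHull K := by
  subst hHdef hKdef
  intro p hp P
  by_contra hcon
  have hK : ∀ q : EuclideanSpace ℂ (Fin 2),
      ‖q 0‖ = ‖q 1‖ →
      ‖q 0‖ ^ 2 + ‖q 1‖ ^ 2 ≤ r ^ 2 →
      MvPolynomial.eval (fun i => q i) P ≠ MvPolynomial.eval (fun i => p i) P :=
    fun q h1 h2 h => hcon ⟨q, ⟨h1, h2⟩, h⟩
  set lam := MvPolynomial.eval (fun i => p i) P with hlam
  set Q := P - MvPolynomial.C lam with hQdef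
  -- coordinates of p are < r/2
  have hpi : ∀ i : Fin 2, ‖p i‖ < r / 2 := by
    intro i
    have hnorm : ‖p‖ < r / 2 := by simpa using mem_ball_zero_iff.mp hp
    refine lt_of_le_of_lt ?_ hnorm
    rw [show ‖p i‖ = ‖p i‖ from rfl, EuclideanSpace.norm_eq]
    rw [Real.le_sqrt (norm_nonneg _) (Finset.sum_nonneg fun j _ => sq_nonneg _)]
    exact Finset.single_le_sum (fun j _ => sq_nonneg ‖p j‖) (Finset.mem_univ i)
  set M : ℝ := max (‖p 0‖) (‖p 1‖) with hM
  have hMlt : M < r / 2 := max_lt (hpi 0) (hpi 1)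
  have hM0 : 0 ≤ M := le_max_of_le_left (norm_nonneg _)
  -- key nonvanishing on the cone up to radius M
  have hQK : ∀ z w : ℂ, ‖z‖ = ‖w‖ → ‖z‖ ≤ M →
      MvPolynomial.eval ![z, w] Q ≠ 0 := by
    intro z w hzw hzM
    set q : EuclideanSpace ℂ (Fin 2) := (WithLp.equiv 2 (Fin 2 → ℂ)).symm ![z, w] with hq
    have hq0 : q 0 = z := rfl
    have hq1 : q 1 = w := rfl
    have hbound : ‖q 0‖ ^ 2 + ‖q 1‖ ^ 2 ≤ r ^ 2 := by
      rw [hq0, hq1, ← hzw]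
      nlinarith [norm_nonneg z]
    have hne := hK q (by rw [hq0, hq1]; exact hzw) hbound
    have hfun : (fun i => q i) = ![z, w] := by
      funext i
      fin_cases i
      · exact hq0
      · exact hq1
    intro h0
    apply hne
    rw [hfun] at *
    have : MvPolynomial.eval ![z, w] Q =
        MvPolynomial.eval ![z, w] P - lam := by
      rw [hQdef]; simp
    rw [this] at h0
    have := sub_eq_zero.mp h0
    rw [hfun, this, hlam]
  -- p is a zero of Q
  have hpfun : (fun i => p i) = ![p 0, p 1] := by
    funext i
    fin_cases i <;> rfl
  have hpzero : MvPolynomial.eval ![p 0, p 1] Q = 0 := by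
    rw [← hpfun, hQdef]
    simp [hlam]
  rcases le_total (‖p 1‖) (‖p 0‖) with hcase | hcase
  · have := ConeHull.core Q (p 0) (p 1) hcase
      (fun z w h1 h2 => hQK z w h1 (h2.trans (le_max_left _ _)))
    exact this hpzero
  · have hswap : ∀ z w : ℂ, ‖z‖ = ‖w‖ → ‖z‖ ≤ ‖p 1‖ →
        MvPolynomial.eval ![z, w]
          (MvPolynomial.aeval ![MvPolynomial.X (1 : Fin 2), MvPolynomial.X (0 : Fin 2)] Q) ≠ 0 := by
      intro z w h1 h2
      rw [ConeHull.eval_swap]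
      exact hQK w z h1.symm ((h1 ▸ h2).trans (le_max_right _ _))
    have := ConeHull.core _ (p 1) (p 0) hcase hswap
    rw [ConeHull.eval_swap] at this
    exact this hpzero
end
end
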